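/- Let L > 0 and let h : ℝ → ℝ be an L-Lipschitz function (|h(x) − h(y)| ≤ L|x − y| for all x, y ∈ ℝ). Fix t with 0 < t ≤ 1/(1+L), let x₀ ∈ ℝ with h(x₀) > x₀, and suppose there exists a fixed point d of h with d > x₀. Let c be the smallest fixed point of h with c > x₀. Then the sequence defined by x_{n+1} = (1−t)·x_n + t·h(x_n) is nondecreasing and converges to c. -/

import Mathlib

/-- If `h : ℝ → ℝ` is L-Lipschitz, `h x₀ > x₀`, and `c` is the smallest fixed
point of `h` greater than `x₀`, then the Krasnoselskii iteration starting at
`x₀` is nondecreasing and converges to `c`. -/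
theorem stmt_13 (L t c : ℝ) (hL : 0 < L) (h : ℝ → ℝ)
    (hlip : ∀ x y : ℝ, |h x - h y| ≤ L * |x - y|)
    (ht0 : 0 < t) (ht1 : t ≤ 1 / (1 + L))
    (x : ℕ → ℝ)
    (hstart : h (x 0) > x 0)
    (hcfix : h c = c) (hcgt : x 0 < c)
    (hcmin : ∀ d : ℝ, h d = d → x 0 < d → c ≤ d)
    (hrec : ∀ n, x (n + 1) = (1 - t) * x n + t * h (x n)) :
    Monotone x ∧ Filter.Tendsto x Filter.atTop (nhds c) := by
  have hL1 : (0:ℝ) < 1 + L := by linarith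
  have htL : t * (1 + L) ≤ 1 := by
    have := (le_div_iff₀ hL1).mp ht1
    linarith
  have hcont : Continuous h := by
    have hl : LipschitzWith ⟨L, hL.le⟩ h := by
      apply LipschitzWith.of_dist_le_mul
      intro a b
      rw [Real.dist_eq, Real.dist_eq]; exact hlip a b
    exact hl.continuous
  -- h z ≥ z for z ∈ [x 0, c]
  have key : ∀ z : ℝ, x 0 ≤ z → z ≤ c → z ≤ h z := by
    intro z hz0 hzc
    by_contra hc
    push_neg at hc
    have hz0' : x 0 < z := by
      rcases eq_or_lt_of_le hz0 with rfl | hlt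
      · linarith
      · exact hlt
    -- IVT for g = h - id on [x 0, z]
    have hgc : Continuous fun y => h y - y := hcont.sub continuous_id
    have : (0:ℝ) ∈ Set.Icc (h z - z) (h (x 0) - x 0) := by
      constructor <;> linarith
    obtain ⟨d, hd, hd0⟩ := intermediate_value_Icc' hz0 (hgc.continuousOn) this
    have hdf : h d = d := by
      simp only at hd0; linarith
    have hd0' : x 0 < d := by
      rcases eq_or_lt_of_le hd.1 with rfl | hlt
      · linarith
      · exact hlt
    have := hcmin d hdf hd0'
    have : c ≤ z := le_trans this hd.2
    have : z = c := le_antisymm hzc this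
    subst this
    linarith
  -- invariant: x0 ≤ x n ≤ c
  have inv : ∀ n, x 0 ≤ x n ∧ x n ≤ c := by
    intro n
    induction n with
    | zero => exact ⟨le_refl _, hcgt.le⟩
    | succ n ih =>
      obtain ⟨h1, h2⟩ := ih
      have hge : x n ≤ h (x n) := key _ h1 h2
      constructor
      · rw [hrec n]; nlinarith
      · rw [hrec n]
        have hha : h (x n) - c ≤ L * (c - x n) := by
          have h3 := hlip (x n) c
          rw [hcfix, abs_of_nonpos (show x n - c ≤ 0 by linarith)] at h3
          have := le_of_abs_le h3
          linarith
        nlinarith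
  have hmono : Monotone x := by
    apply monotone_nat_of_le_succ
    intro n
    obtain ⟨h1, h2⟩ := inv n
    have hge : x n ≤ h (x n) := key _ h1 h2
    rw [hrec n]; nlinarith
  have hbdd : BddAbove (Set.range x) := ⟨c, by rintro _ ⟨n, rfl⟩; exact (inv n).2⟩
  set l := ⨆ n, x n with hl
  have htend : Filter.Tendsto x Filter.atTop (nhds l) := tendsto_atTop_ciSup hmono hbdd
  have hlle : l ≤ c := ciSup_le fun n => (inv n).2
  have hlgt : x 0 < l := by
    have h1 : x 1 ≤ l := le_ciSup hbdd 1
    have : x 0 < x 1 := by rw [hrec 0]; nlinarith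
    linarith
  -- limit is a fixed point
  have htend2 : Filter.Tendsto (fun n => x (n + 1)) Filter.atTop (nhds l) :=
    htend.comp (Filter.tendsto_add_atTop_nat 1)
  have htend3 : Filter.Tendsto (fun n => (1 - t) * x n + t * h (x n)) Filter.atTop
      (nhds ((1 - t) * l + t * h l)) := by
    exact (Filter.Tendsto.const_mul _ htend).add
      (Filter.Tendsto.const_mul _ ((hcont.tendsto l).comp htend))
  have heq : l = (1 - t) * l + t * h l := by
    apply tendsto_nhds_unique htend2
    simpa only [hrec] using htend3
  have hfix : h l = l := by
    have : t * (h l - l) = 0 := by linarith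
    have := mul_eq_zero.mp this
    rcases this with h' | h'
    · exact absurd h' (ne_of_gt ht0)
    · linarith
  have : c ≤ l := hcmin l hfix hlgt
  have : l = c := le_antisymm hlle this
  exact ⟨hmono, this ▸ htend⟩
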